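/- Every nonempty closed convex subset of a reflexive strictly convex real Banach space is a Chebyshev set: each point of the space has a unique nearest point in the subset. -/

import Mathlib

open NormedSpace Metric Set

section aux

variable {E : Type*} [NormedAddCommGroup E] [NormedSpace ℝ E]

/-- Existence of a nearest point in a nonempty closed convex subset of a reflexive
real Banach space. -/
theorem exists_norm_eq_infDist_of_reflexive
    (hrefl : Function.Surjective (NormedSpace.inclusionInDoubleDual ℝ E))
    (C : Set E) (hC : C.Nonempty) (hCc : IsClosed C) (hCv : Convex ℝ C) (x : E) :
    ∃ y ∈ C, ‖x - y‖ = Metric.infDist x C := by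
  classical
  set ι := NormedSpace.inclusionInDoubleDual ℝ E with hι
  have hisom : ∀ a : E, ‖ι a‖ = ‖a‖ := fun a =>
    (NormedSpace.inclusionInDoubleDualLi ℝ (E := E)).norm_map a
  have hinj : Function.Injective ι := by
    intro a b hab
    rw [NormedSpace.eq_iff_forall_dual_eq ℝ]
    intro g
    have := congrFun (congrArg DFunLike.coe hab) g
    exact this
  set d := Metric.infDist x C with hd
  have hd0 : 0 ≤ d := Metric.infDist_nonneg
  -- the decreasing sequence of sets
  set S : ℕ → Set E := fun n => C ∩ Metric.closedBall x (d + 1 / (n + 1)) with hS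
  have hSconv : ∀ n, Convex ℝ (S n) := fun n => hCv.inter (convex_closedBall x _)
  have hSclosed : ∀ n, IsClosed (S n) := fun n => hCc.inter Metric.isClosed_closedBall
  have hSne : ∀ n, (S n).Nonempty := by
    intro n
    have hlt : d < d + 1 / (n + 1) := lt_add_of_pos_right d (by positivity)
    obtain ⟨y, hyC, hy⟩ := (Metric.infDist_lt_iff hC).mp hlt
    exact ⟨y, hyC, by simpa [Metric.mem_closedBall, dist_comm] using hy.le⟩
  have hSanti : ∀ m n, m ≤ n → S n ⊆ S m := by
    intro m n hmn y hy
    refine ⟨hy.1, ?_⟩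
    have h1 : (1 : ℝ) / (n + 1) ≤ 1 / (m + 1) := by
      apply one_div_le_one_div_of_le (by positivity)
      exact_mod_cast by omega
    exact Metric.closedBall_subset_closedBall (by linarith) hy.2
  have hSsub : ∀ n, S n ⊆ Metric.closedBall x (d + 1) := by
    intro n y hy
    have h1 : (1 : ℝ) / (n + 1) ≤ 1 := by
      rw [div_le_one (by positivity)]; linarith [Nat.cast_nonneg (α := ℝ) n]
    exact Metric.closedBall_subset_closedBall (by linarith) hy.2
  -- inverse of the double dual embedding and its weak continuity
  set ψ : WeakDual ℝ (StrongDual ℝ E) → WeakSpace ℝ E :=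
    fun z => toWeakSpace ℝ E (Function.surjInv hrefl (WeakDual.toStrongDual z)) with hψ
  have hψeq : ∀ z, ι (Function.surjInv hrefl (WeakDual.toStrongDual z)) =
      WeakDual.toStrongDual z := fun z => Function.surjInv_eq hrefl _
  have hψcont : Continuous ψ := by
    apply WeakBilin.continuous_of_continuous_eval
    intro f
    have : (fun z : WeakDual ℝ (StrongDual ℝ E) =>
        (topDualPairing ℝ E).flip (ψ z) f) = fun z => z f := by
      funext z
      have h1 := congrFun (congrArg DFunLike.coe (hψeq z)) f
      simpa using h1.symm ▸ rfl
    rw [this]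
    exact WeakDual.eval_continuous f
  -- the weakly compact ball
  have hBcomp : IsCompact (ψ '' (WeakDual.toStrongDual ⁻¹' Metric.closedBall (ι x) (d + 1))) :=
    (WeakDual.isCompact_closedBall (𝕜 := ℝ) (E := StrongDual ℝ E) (ι x) (d + 1)).image hψcont
  -- the sets S n, viewed in the weak space
  set T : ℕ → Set (WeakSpace ℝ E) := fun n => toWeakSpace ℝ E '' S n with hT
  have hTclosed : ∀ n, IsClosed (T n) := by
    intro n
    have h1 := (hSconv n).toWeakSpace_closure (𝕜 := ℝ)
    rw [(hSclosed n).closure_eq] at h1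
    rw [hT]
    exact closure_eq_iff_isClosed.mp h1.symm
  have hTsub : ∀ n, T n ⊆ ψ '' (WeakDual.toStrongDual ⁻¹' Metric.closedBall (ι x) (d + 1)) := by
    rintro n _ ⟨y, hy, rfl⟩
    have hyb : ι y ∈ Metric.closedBall (ι x) (d + 1) := by
      rw [Metric.mem_closedBall, dist_eq_norm (E := StrongDual ℝ (StrongDual ℝ E)), ← map_sub ι y x, hisom]
      rw [← dist_eq_norm]
      exact hSsub n hy
    refine ⟨ι y, hyb, ?_⟩
    exact congrArg (toWeakSpace ℝ E) (hinj (hψeq (ι y)))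
  have hTcomp : ∀ n, IsCompact (T n) := fun n =>
    IsCompact.of_isClosed_subset hBcomp (hTclosed n) (hTsub n)
  have hTne : ∀ n, (T n).Nonempty := fun n => (hSne n).image _
  have hTdir : Directed (· ⊇ ·) T := fun m n =>
    ⟨max m n, Set.image_mono (hSanti m _ (le_max_left m n)),
      Set.image_mono (hSanti n _ (le_max_right m n))⟩
  obtain ⟨w, hw⟩ := IsCompact.nonempty_iInter_of_directed_nonempty_isCompact_isClosed
    T hTdir hTne hTcomp hTclosed
  set y := (toWeakSpace ℝ E).symm w with hy
  have hymem : ∀ n, y ∈ S n := by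
    intro n
    have := Set.mem_iInter.mp hw n
    obtain ⟨z, hz, hzw⟩ := this
    have : z = y := by rw [hy, ← hzw]; simp
    rwa [← this]
  refine ⟨y, (hymem 0).1, ?_⟩
  have hle : ∀ n : ℕ, ‖x - y‖ ≤ d + 1 / (n + 1) := by
    intro n
    have := (hymem n).2
    rwa [Metric.mem_closedBall, dist_comm, dist_eq_norm] at this
  have h1 : ‖x - y‖ ≤ d := by
    by_contra h
    push_neg at h
    obtain ⟨n, hn⟩ := exists_nat_one_div_lt (show 0 < ‖x - y‖ - d by linarith)
    have := hle n
    have : (1 : ℝ) / (n + 1) < ‖x - y‖ - d := hn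
    linarith [hle n]
  have h2 : d ≤ ‖x - y‖ := by
    rw [← dist_eq_norm]
    exact Metric.infDist_le_dist_of_mem (hymem 0).1
  linarith

end aux

/-- Every nonempty closed convex subset of a reflexive strictly convex real Banach
space is a Chebyshev set. Reflexivity is expressed by surjectivity of the canonical
embedding into the double dual. -/
theorem stmt_14 {E : Type*} [NormedAddCommGroup E] [NormedSpace ℝ E] [CompleteSpace E]
    [StrictConvexSpace ℝ E]
    (hrefl : Function.Surjective (NormedSpace.inclusionInDoubleDual ℝ E))
    (C : Set E) (hC : C.Nonempty) (hCc : IsClosed C) (hCv : Convex ℝ C) :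
    ∀ x : E, ∃! y : E, y ∈ C ∧ ‖x - y‖ = Metric.infDist x C := by
  intro x
  obtain ⟨y, hyC, hy⟩ := exists_norm_eq_infDist_of_reflexive hrefl C hC hCc hCv x
  refine ⟨y, ⟨hyC, hy⟩, ?_⟩
  rintro z ⟨hzC, hz⟩
  by_contra hne
  set d := Metric.infDist x C with hd
  -- midpoint
  set m := (1 / 2 : ℝ) • (z + y) with hm
  have hmC : m ∈ C := by
    have := hCv hzC hyC (by norm_num : (0:ℝ) ≤ 1/2) (by norm_num : (0:ℝ) ≤ 1/2) (by norm_num)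
    simpa [hm, smul_add] using this
  have hxz : x - m = (1 / 2 : ℝ) • ((x - z) + (x - y)) := by
    rw [hm]; module
  have hne' : x - z ≠ x - y := fun h => hne (by rwa [sub_right_inj] at h)
  have hlt : ‖x - m‖ < d := by
    rw [hxz]
    have := (norm_midpoint_lt_iff (x := x - z) (y := x - y) (by rw [hz, hy])).mpr hne'
    rwa [hz] at this
  have : d ≤ ‖x - m‖ := by
    rw [← dist_eq_norm]
    exact Metric.infDist_le_dist_of_mem hmC
  linarith
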